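/- (Commutator trick.) Let G ≤ Aut(T) be a fractal group such that for every n ≥ 1 the level stabilizer St_G(n) acts level-transitively on the subtrees rooted at level n. Let s ∈ G, and suppose there exist N ≥ 1 and g ∈ G such that: (i) there are vertices u, w ∈ T with |u| ≤ |w| ≤ N fixed by g, and (ii) g|_u = 1 and g|_w = s. Then for every n ≥ 1 and every vertex v with |v| ≥ n + N, we have s ∈ St_G(n)_v. In particular, if this holds for every element s of a generating set of G, then G is mixing with delay constant N. -/

import Mathlib

open MeasureTheory

namespace ArbGal

/-- Vertices of the `d`-regular rooted tree: the free monoid on `{0, …, d-1}`. -/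
abbrev V (d : ℕ) := List (Fin d)

instance (d : ℕ) : TopologicalSpace (V d) := ⊥

/-- A permutation of the vertices is an automorphism of the rooted tree iff it
preserves the level of vertices and the prefix (ancestor) relation. -/
def IsTreeAut {d : ℕ} (g : Equiv.Perm (V d)) : Prop :=
  (∀ v : V d, (g v).length = v.length) ∧ ∀ u v : V d, u <+: v → g u <+: g v

/-- The automorphism group `Aut(T)` of the `d`-regular rooted tree, realized as a
subgroup of the permutation group of the set of vertices. -/
def treeAutGroup (d : ℕ) : Subgroup (Equiv.Perm (V d)) where
  carrier := {g | IsTreeAut g}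
  one_mem' := ⟨fun _ => rfl, fun _ _ h => h⟩
  mul_mem' := by
    rintro a b ⟨ha1, ha2⟩ ⟨hb1, hb2⟩
    refine ⟨fun v => ?_, fun u v h => ?_⟩
    · simp only [Equiv.Perm.mul_apply, ha1, hb1]
    · simpa only [Equiv.Perm.mul_apply] using ha2 _ _ (hb2 _ _ h)
  inv_mem' := by
    rintro g ⟨h1, h2⟩
    have hlen : ∀ v : V _, (g⁻¹ v).length = v.length := by
      intro v
      have := h1 (g⁻¹ v)
      rw [(show g (g⁻¹ v) = v from Equiv.apply_symm_apply g v)] at this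
      exact this.symm
    refine ⟨hlen, fun u v huv => ?_⟩
    have h3 : (g⁻¹ v).take (g⁻¹ u).length <+: g⁻¹ v := List.take_prefix _ _
    have h4 : g ((g⁻¹ v).take (g⁻¹ u).length) <+: g (g⁻¹ v) := h2 _ _ h3
    rw [(show g (g⁻¹ v) = v from Equiv.apply_symm_apply g v)] at h4
    have hlen4 : (g ((g⁻¹ v).take (g⁻¹ u).length)).length = u.length := by
      rw [h1, List.length_take, hlen, hlen]
      exact min_eq_left huv.length_le
    have h5 : g ((g⁻¹ v).take (g⁻¹ u).length) = u := by
      rcases List.prefix_or_prefix_of_prefix h4 huv with h | h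
      · exact h.eq_of_length hlen4
      · exact (h.eq_of_length hlen4.symm).symm
    have h6 : (g⁻¹ v).take (g⁻¹ u).length = g⁻¹ u := by
      apply g.injective
      rw [h5, (show g (g⁻¹ u) = u from Equiv.apply_symm_apply g u)]
    rw [← h6]
    exact List.take_prefix _ _

/-- The group `Aut(T)`, as a type. -/
abbrev AutT (d : ℕ) := ↥(treeAutGroup d)

/-- `Aut(T)` carries the congruence topology, i.e. the topology of pointwise
convergence on the (discrete) set of vertices. -/
instance (d : ℕ) : TopologicalSpace (Equiv.Perm (V d)) :=
  TopologicalSpace.induced (fun g => (g : V d → V d)) Pi.topologicalSpace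

variable {d : ℕ}

lemma autT_len (g : AutT d) (v : V d) : ((g : Equiv.Perm (V d)) v).length = v.length := g.2.1 v

lemma autT_prefix (g : AutT d) {u v : V d} (h : u <+: v) :
    (g : Equiv.Perm (V d)) u <+: (g : Equiv.Perm (V d)) v := g.2.2 u v h

/-- The underlying function of the section `g|_v`. -/
def secFun (g : AutT d) (v w : V d) : V d := ((g : Equiv.Perm (V d)) (v ++ w)).drop v.length

lemma sec_spec (g : AutT d) (v w : V d) :
    (g : Equiv.Perm (V d)) (v ++ w) = (g : Equiv.Perm (V d)) v ++ secFun g v w := by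
  have h1 : (g : Equiv.Perm (V d)) v <+: (g : Equiv.Perm (V d)) (v ++ w) :=
    autT_prefix g (List.prefix_append v w)
  have h2 := autT_len g v
  have h3 : (g : Equiv.Perm (V d)) v = ((g : Equiv.Perm (V d)) (v ++ w)).take v.length := by
    rw [← h2]; exact List.prefix_iff_eq_take.mp h1
  conv_lhs => rw [← List.take_append_drop v.length ((g : Equiv.Perm (V d)) (v ++ w))]
  rw [← h3]; rfl

lemma coe_inv (g : AutT d) : ((g⁻¹ : AutT d) : Equiv.Perm (V d)) = (g : Equiv.Perm (V d))⁻¹ := rfl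

lemma sec_spec' (g : AutT d) (v w : V d) :
    (g : Equiv.Perm (V d)) (v ++ w)
      = (g : Equiv.Perm (V d)) v ++ List.drop v.length ((g : Equiv.Perm (V d)) (v ++ w)) :=
  sec_spec g v w

/-- The section (state) `g|_v` of a tree automorphism `g` at the vertex `v`; it is
the unique automorphism satisfying `g(v·w) = g(v)·(g|_v)(w)` for all `w`. -/
def sectionAt (g : AutT d) (v : V d) : AutT d :=
  ⟨{ toFun := secFun g v
     invFun := secFun g⁻¹ ((g : Equiv.Perm (V d)) v)
     left_inv := by
       intro w
       show secFun g⁻¹ ((g : Equiv.Perm (V d)) v) (secFun g v w) = w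
       unfold secFun
       rw [coe_inv, ← sec_spec' g v w, (show (g : Equiv.Perm (V d))⁻¹ ((g : Equiv.Perm (V d)) (v ++ w)) = v ++ w from Equiv.symm_apply_apply _ _), autT_len, List.drop_left]
     right_inv := by
       intro w
       show secFun g v (secFun g⁻¹ ((g : Equiv.Perm (V d)) v) w) = w
       unfold secFun
       rw [coe_inv]
       have h := sec_spec' g⁻¹ ((g : Equiv.Perm (V d)) v) w
       rw [coe_inv, (show (g : Equiv.Perm (V d))⁻¹ ((g : Equiv.Perm (V d)) v) = v from Equiv.symm_apply_apply _ _)] at h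
       rw [← h, (show (g : Equiv.Perm (V d)) ((g : Equiv.Perm (V d))⁻¹ ((g : Equiv.Perm (V d)) v ++ w)) = (g : Equiv.Perm (V d)) v ++ w from Equiv.apply_symm_apply _ _), ← autT_len g v, List.drop_left] },
   by
     constructor
     · intro w
       show (secFun g v w).length = w.length
       unfold secFun
       rw [List.length_drop, autT_len, List.length_append]
       omega
     · intro u w huw
       show secFun g v u <+: secFun g v w
       have h1 : v ++ u <+: v ++ w := by
         obtain ⟨c, rfl⟩ := huw
         rw [← List.append_assoc]
         exact List.prefix_append _ _
       have h2 := autT_prefix g h1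
       rw [sec_spec g v u, sec_spec g v w] at h2
       obtain ⟨c, hc⟩ := h2
       rw [List.append_assoc] at hc
       exact ⟨c, List.append_cancel_left hc⟩⟩

/-- The pointwise stabilizer `St(n)` of the `n`-th level, as a subgroup of `Aut(T)`. -/
def levelStab (d n : ℕ) : Subgroup (AutT d) where
  carrier := {g | ∀ v : V d, v.length = n → (g : Equiv.Perm (V d)) v = v}
  one_mem' := fun _ _ => rfl
  mul_mem' := by
    rintro a b ha hb v hv
    show (a : Equiv.Perm (V d)) ((b : Equiv.Perm (V d)) v) = v
    rw [hb v hv, ha v hv]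
  inv_mem' := by
    intro g hg v hv
    show (g : Equiv.Perm (V d))⁻¹ v = v
    conv_lhs => rw [← hg v hv]
    exact Equiv.symm_apply_apply _ _

/-- Two automorphisms agree on the truncated tree `T^m` (have the same image
under `π_m`). -/
def truncEq (d : ℕ) (m : ℕ) (g h : AutT d) : Prop :=
  ∀ w : V d, w.length ≤ m → (g : Equiv.Perm (V d)) w = (h : Equiv.Perm (V d)) w

/-- `St_G(n)_v^m = π_m(G)`: the projection of the `n`-th level stabilizer of `G`
at the vertex `v`, truncated at depth `m`, coincides with `π_m(G)`. -/
def SectModEq (d : ℕ) (G : Subgroup (AutT d)) (n m : ℕ) (v : V d) : Prop :=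
  ∀ a : AutT d,
    (∃ g, g ∈ G ∧ g ∈ levelStab d n ∧ (g : Equiv.Perm (V d)) v = v ∧
        truncEq d m (sectionAt g v) a)
    ↔ (∃ b ∈ G, truncEq d m b a)

/-- `G` is self-similar: all sections of elements of `G` belong to `G`. -/
def SelfSimilar (d : ℕ) (G : Subgroup (AutT d)) : Prop :=
  ∀ g ∈ G, ∀ v : V d, sectionAt g v ∈ G

/-- `G` is level-transitive. -/
def LevelTrans (d : ℕ) (G : Subgroup (AutT d)) : Prop :=
  ∀ v w : V d, v.length = w.length → ∃ g ∈ G, (g : Equiv.Perm (V d)) v = w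

/-- `G` is fractal: self-similar, level-transitive, and every projection
`G_v = φ_v(st_G(v))` is all of `G`. -/
def Fractal (d : ℕ) (G : Subgroup (AutT d)) : Prop :=
  SelfSimilar d G ∧ LevelTrans d G ∧
    ∀ v : V d, ∀ h ∈ G, ∃ g ∈ G, (g : Equiv.Perm (V d)) v = v ∧ sectionAt g v = h

/-- For every `n ≥ 1`, the level stabilizer `St_G(n)` acts level-transitively on the
subtrees rooted at the vertices of level `n`. -/
def StabLevelTrans (d : ℕ) (G : Subgroup (AutT d)) : Prop :=
  ∀ n : ℕ, 1 ≤ n → ∀ v u w : V d, v.length = n → u.length = w.length →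
    ∃ g ∈ G ⊓ levelStab d n, (g : Equiv.Perm (V d)) (v ++ u) = v ++ w

/-- A fractal group `G ≤ Aut(T)` is mixing with delay constant `N`. -/
def MixingWithDelay (d : ℕ) (G : Subgroup (AutT d)) (N : ℕ) : Prop :=
  Fractal d G ∧ StabLevelTrans d G ∧
    ∀ m : ℕ, 1 ≤ m → ∀ n : ℕ, 1 ≤ n → ∀ v : V d, n + N ≤ v.length → SectModEq d G n m v

/-- A fractal group `G ≤ Aut(T)` is mixing: its level stabilizers act
level-transitively below their level, and for all `n, m ≥ 1` there is a delay
`N = N(m)` with `St_G(n)_v^m = π_m(G)` whenever `|v| ≥ n + N`. -/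
def Mixing (d : ℕ) (G : Subgroup (AutT d)) : Prop :=
  Fractal d G ∧ StabLevelTrans d G ∧
    ∀ m : ℕ, 1 ≤ m → ∃ N : ℕ,
      ∀ n : ℕ, 1 ≤ n → ∀ v : V d, n + N ≤ v.length → SectModEq d G n m v

/-- `g` fixes an end of the tree `T`, i.e. an infinite rooted path. -/
def FixesEnd (d : ℕ) (g : AutT d) : Prop :=
  ∃ ω : ℕ → Fin d, ∀ n : ℕ,
    (g : Equiv.Perm (V d)) (List.ofFn (fun i : Fin n => ω i)) = List.ofFn (fun i : Fin n => ω i)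

/-- `X_n(g)`: the number of vertices of level `n` fixed by `g`. -/
noncomputable def Xfix (d n : ℕ) (g : AutT d) : ℕ :=
  Set.ncard {w : Fin n → Fin d |
    (g : Equiv.Perm (V d)) (List.ofFn w) = List.ofFn w}

/-- The Borel σ-algebra on a closed subgroup of `Aut(T)`. -/
instance (d : ℕ) (G : Subgroup (AutT d)) : MeasurableSpace ↥G := borel ↥G

/-- The fixed-point process `{X_n}` of `G`, with respect to the measure `μ` on `G`,
is a martingale. -/
def FPMartingale (d : ℕ) (G : Subgroup (AutT d)) (μ : Measure ↥G) : Prop :=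
  (∀ n : ℕ, 1 ≤ n → Integrable (fun g : ↥G => (Xfix d n (g : AutT d) : ℝ)) μ) ∧
  ∀ n : ℕ, 1 ≤ n → ∀ t : ℕ → ℝ,
    μ {g : ↥G | ∀ i, 1 ≤ i → i ≤ n → (Xfix d i (g : AutT d) : ℝ) = t i} ≠ 0 →
    ∫ g in {g : ↥G | ∀ i, 1 ≤ i → i ≤ n → (Xfix d i (g : AutT d) : ℝ) = t i},
        (Xfix d (n + 1) (g : AutT d) : ℝ) ∂μ
      = t n * (μ {g : ↥G | ∀ i, 1 ≤ i → i ≤ n → (Xfix d i (g : AutT d) : ℝ) = t i}).toReal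


section Auxiliary

variable {d : ℕ}

lemma autT_ext {g h : AutT d}
    (H : ∀ v : V d, (g : Equiv.Perm (V d)) v = (h : Equiv.Perm (V d)) v) : g = h :=
  Subtype.ext (Equiv.ext H)

lemma mul_apply (g h : AutT d) (v : V d) :
    ((g * h : AutT d) : Equiv.Perm (V d)) v
      = (g : Equiv.Perm (V d)) ((h : Equiv.Perm (V d)) v) := rfl

lemma inv_apply_eq {g : AutT d} {v w : V d} (h : (g : Equiv.Perm (V d)) v = w) :
    ((g⁻¹ : AutT d) : Equiv.Perm (V d)) w = v := by
  rw [coe_inv, ← h]; exact Equiv.symm_apply_apply _ _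

lemma inv_apply_fix {g : AutT d} {v : V d} (h : (g : Equiv.Perm (V d)) v = v) :
    ((g⁻¹ : AutT d) : Equiv.Perm (V d)) v = v := inv_apply_eq h

lemma apply_append (g : AutT d) (v w : V d) :
    (g : Equiv.Perm (V d)) (v ++ w)
      = (g : Equiv.Perm (V d)) v ++ ((sectionAt g v : AutT d) : Equiv.Perm (V d)) w :=
  sec_spec g v w

lemma sectionAt_one (v : V d) : sectionAt (1 : AutT d) v = 1 := by
  apply autT_ext; intro w
  show secFun 1 v w = w
  unfold secFun
  exact List.drop_left

lemma secFun_mul (p q : AutT d) (v w : V d) :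
    secFun (p * q) v w = secFun p ((q : Equiv.Perm (V d)) v) (secFun q v w) := by
  have h1 : ((p * q : AutT d) : Equiv.Perm (V d)) (v ++ w)
      = ((p * q : AutT d) : Equiv.Perm (V d)) v ++ secFun (p * q) v w := sec_spec _ v w
  rw [mul_apply, mul_apply, sec_spec q v w, sec_spec p] at h1
  exact (List.append_cancel_left h1).symm

lemma sectionAt_mul (p q : AutT d) (v : V d) :
    sectionAt (p * q) v = sectionAt p ((q : Equiv.Perm (V d)) v) * sectionAt q v := by
  apply autT_ext; intro w
  rw [mul_apply]
  exact secFun_mul p q v w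

lemma sectionAt_inv (g : AutT d) (v : V d) :
    sectionAt g⁻¹ ((g : Equiv.Perm (V d)) v) = (sectionAt g v)⁻¹ := by
  have h := sectionAt_mul g⁻¹ g v
  rw [inv_mul_cancel, sectionAt_one] at h
  exact mul_eq_one_iff_eq_inv.mp h.symm

lemma sectionAt_append (g : AutT d) (v w : V d) :
    sectionAt g (v ++ w) = sectionAt (sectionAt g v) w := by
  apply autT_ext; intro z
  show secFun g (v ++ w) z = secFun (sectionAt g v) w z
  unfold secFun
  rw [List.append_assoc, sec_spec g v (w ++ z), List.length_append, ← autT_len g v,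
    List.drop_length_add_append]
  rfl

lemma levelStab_le {n m : ℕ} (hd0 : 0 < d) (hnm : n ≤ m) {g : AutT d}
    (hg : g ∈ levelStab d m) : g ∈ levelStab d n := by
  intro p hp
  have hq : (p ++ List.replicate (m - n) (⟨0, hd0⟩ : Fin d)).length = m := by
    simp [hp]; omega
  have h1 := hg _ hq
  have h2 : (g : Equiv.Perm (V d)) p <+: p ++ List.replicate (m - n) (⟨0, hd0⟩ : Fin d) := by
    have := autT_prefix g (List.prefix_append p (List.replicate (m - n) (⟨0, hd0⟩ : Fin d)))
    rwa [h1] at this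
  rw [List.prefix_iff_eq_take.mp h2, autT_len, hp]
  exact List.take_left' hp

lemma conj_mem_levelStab {n : ℕ} (f : AutT d) {a : AutT d} (ha : a ∈ levelStab d n) :
    f⁻¹ * a * f ∈ levelStab d n := by
  intro p hp
  have h1 : ((f : Equiv.Perm (V d)) p).length = n := by rw [autT_len]; exact hp
  show ((f⁻¹ * a * f : AutT d) : Equiv.Perm (V d)) p = p
  rw [mul_apply, mul_apply, ha _ h1]
  exact inv_apply_eq rfl

end Auxiliary
lemma commutator_trick_single
    (d : ℕ) (hd : 2 ≤ d) (G : Subgroup (AutT d))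
    (hfr : Fractal d G) (hst : StabLevelTrans d G)
    (s : AutT d) (hs : s ∈ G) (N : ℕ) (hN : 1 ≤ N)
    (hex : ∃ g ∈ G, ∃ u w : V d, u.length ≤ w.length ∧ w.length ≤ N ∧
        (g : Equiv.Perm (V d)) u = u ∧ (g : Equiv.Perm (V d)) w = w ∧
        sectionAt g u = 1 ∧ sectionAt g w = s)
    (n : ℕ) (hn : 1 ≤ n) (v : V d) (hv : n + N ≤ v.length) :
    ∃ h ∈ G, h ∈ levelStab d n ∧ (h : Equiv.Perm (V d)) v = v ∧ sectionAt h v = s := by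
  obtain ⟨g, hgG, u, w, huw, hwN, hgu, hgw, hsecu, hsecw⟩ := hex
  obtain ⟨hss, hlt, hfrac⟩ := hfr
  have hd0 : 0 < d := by omega
  set x := v.take (v.length - w.length) with hx
  set y := v.drop (v.length - w.length) with hy
  have hxy : x ++ y = v := List.take_append_drop _ v
  have hwL : w.length ≤ v.length := le_trans (le_trans hwN (Nat.le_add_left N n)) hv
  have hxlen : x.length = v.length - w.length := by rw [hx, List.length_take]; omega
  have hylen : y.length = w.length := by rw [hy, List.length_drop]; omega
  have hnx : n ≤ x.length := by omega
  -- an element r ∈ G with r(y) = w and trivial section at y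
  obtain ⟨r₀, hr₀G, hr₀⟩ := hlt y w (by rw [hylen])
  obtain ⟨ρ, hρG, hρfix, hρsec⟩ := hfrac y (sectionAt r₀ y)⁻¹ (inv_mem (hss r₀ hr₀G y))
  set r := r₀ * ρ with hr
  have hrG : r ∈ G := mul_mem hr₀G hρG
  have hry : (r : Equiv.Perm (V d)) y = w := by rw [hr, mul_apply, hρfix, hr₀]
  have hrsec : sectionAt r y = 1 := by
    rw [hr, sectionAt_mul, hρfix, hρsec, mul_inv_cancel]
  -- the conjugate g₂ = r⁻¹ g r fixes y with section s, and fixes u₂ with trivial section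
  set g₂ := r⁻¹ * (g * r) with hg2
  have hg₂G : g₂ ∈ G := mul_mem (inv_mem hrG) (mul_mem hgG hrG)
  have hgry : ((g * r : AutT d) : Equiv.Perm (V d)) y = w := by rw [mul_apply, hry, hgw]
  have hg₂y : (g₂ : Equiv.Perm (V d)) y = y := by
    rw [hg2, mul_apply, hgry]; exact inv_apply_eq hry
  have hrinvsec : sectionAt r⁻¹ w = 1 := by
    have h := sectionAt_inv r y
    rw [hry, hrsec, inv_one] at h
    exact h
  have hg₂secy : sectionAt g₂ y = s := by
    rw [hg2, sectionAt_mul, hgry, sectionAt_mul, hry, hsecw, hrsec, mul_one, hrinvsec, one_mul]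
  set u₂ := ((r⁻¹ : AutT d) : Equiv.Perm (V d)) u with hu₂
  have hru₂ : (r : Equiv.Perm (V d)) u₂ = u := by
    rw [hu₂, coe_inv]; exact Equiv.apply_symm_apply _ _
  have hu₂len : u₂.length = u.length := autT_len r⁻¹ u
  have hgru₂ : ((g * r : AutT d) : Equiv.Perm (V d)) u₂ = u := by rw [mul_apply, hru₂, hgu]
  have hg₂u₂ : (g₂ : Equiv.Perm (V d)) u₂ = u₂ := by
    rw [hg2, mul_apply, hgru₂]
  have hg₂secu₂ : sectionAt g₂ u₂ = 1 := by
    rw [hg2, sectionAt_mul, hgru₂, sectionAt_mul, hru₂, hsecu, one_mul]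
    have h4 := sectionAt_inv r u₂
    rw [hru₂] at h4
    rw [h4, inv_mul_cancel]
  -- pad u₂ to the length of y
  set u₂' := u₂ ++ List.replicate (w.length - u.length) (⟨0, hd0⟩ : Fin d) with hu₂'
  have hu₂'len : u₂'.length = y.length := by
    rw [hu₂', List.length_append, List.length_replicate, hu₂len, hylen]; omega
  have hg₂u₂' : (g₂ : Equiv.Perm (V d)) u₂' = u₂' := by
    rw [hu₂', apply_append, hg₂u₂, hg₂secu₂]; rfl
  have hg₂secu₂' : sectionAt g₂ u₂' = 1 := by
    rw [hu₂', sectionAt_append, hg₂secu₂, sectionAt_one]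
  -- lift g₂ at the prefix x
  obtain ⟨f, hfG, hfx, hfsec⟩ := hfrac x g₂ hg₂G
  set z := x ++ u₂' with hz
  have hfv : (f : Equiv.Perm (V d)) v = v := by
    rw [← hxy, apply_append, hfx, hfsec, hg₂y]
  have hfsecv : sectionAt f v = s := by
    rw [← hxy, sectionAt_append, hfsec, hg₂secy]
  have hfz : (f : Equiv.Perm (V d)) z = z := by
    rw [hz, apply_append, hfx, hfsec, hg₂u₂']
  have hfsecz : sectionAt f z = 1 := by
    rw [hz, sectionAt_append, hfsec, hg₂secu₂']
  -- an element a of St(n) with a(v) = z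
  obtain ⟨a, haG', hav⟩ := hst x.length (le_trans hn hnx) x y u₂' rfl hu₂'len.symm
  rw [Subgroup.mem_inf] at haG'
  obtain ⟨haG, haSt⟩ := haG'
  have hav' : (a : Equiv.Perm (V d)) v = z := by rw [← hxy, hz]; exact hav
  have haStn : a ∈ levelStab d n := levelStab_le hd0 hnx haSt
  -- the element h = a⁻¹ f⁻¹ a f works
  refine ⟨a⁻¹ * (f⁻¹ * (a * f)), mul_mem (inv_mem haG) (mul_mem (inv_mem hfG)
    (mul_mem haG hfG)), ?_, ?_, ?_⟩
  · rw [← mul_assoc f⁻¹ a f]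
    exact mul_mem (inv_mem haStn) (conj_mem_levelStab f haStn)
  · simp only [mul_apply]
    rw [hfv, hav', inv_apply_fix hfz, inv_apply_eq hav']
  · have e1 : ((f⁻¹ * (a * f) : AutT d) : Equiv.Perm (V d)) v = z := by
      simp only [mul_apply]
      rw [hfv, hav', inv_apply_fix hfz]
    have e2 : ((a * f : AutT d) : Equiv.Perm (V d)) v = z := by
      simp only [mul_apply]
      rw [hfv, hav']
    have e3 : sectionAt f⁻¹ z = 1 := by
      have h := sectionAt_inv f z
      rw [hfz, hfsecz, inv_one] at h
      exact h
    have e4 : sectionAt a⁻¹ z = (sectionAt a v)⁻¹ := by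
      have h := sectionAt_inv a v
      rwa [hav'] at h
    rw [sectionAt_mul a⁻¹ (f⁻¹ * (a * f)) v, e1, e4, sectionAt_mul f⁻¹ (a * f) v, e2, e3,
      one_mul, sectionAt_mul a f v, hfv, hfsecv, ← mul_assoc, inv_mul_cancel, one_mul]
/-- The group of sections at `v` of elements of `G ∩ St(n)` fixing `v`. -/
def secStabGroup (d : ℕ) (G : Subgroup (AutT d)) (n : ℕ) (v : V d) : Subgroup (AutT d) where
  carrier := {c | ∃ h, h ∈ G ∧ h ∈ levelStab d n ∧ (h : Equiv.Perm (V d)) v = v ∧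
    sectionAt h v = c}
  one_mem' := ⟨1, one_mem G, one_mem _, rfl, sectionAt_one v⟩
  mul_mem' := by
    rintro c₁ c₂ ⟨h₁, hG₁, hS₁, hf₁, hs₁⟩ ⟨h₂, hG₂, hS₂, hf₂, hs₂⟩
    refine ⟨h₁ * h₂, mul_mem hG₁ hG₂, mul_mem hS₁ hS₂, ?_, ?_⟩
    · rw [mul_apply, hf₂, hf₁]
    · rw [sectionAt_mul, hf₂, hs₁, hs₂]
  inv_mem' := by
    rintro c ⟨h, hG, hS, hf, hsec⟩
    refine ⟨h⁻¹, inv_mem hG, inv_mem hS, inv_apply_fix hf, ?_⟩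
    have h2 := sectionAt_inv h v
    rw [hf, hsec] at h2
    exact h2

/-- **Commutator trick.** Let `G ≤ Aut(T)` be a fractal group such that
for every `n ≥ 1` the level stabilizer `St_G(n)` acts level-transitively on the subtrees
rooted at level `n`.  If for `s ∈ G` there are `N ≥ 1` and `g ∈ G` having vertices
`u, w` with `|u| ≤ |w| ≤ N` fixed by `g` and with sections `g|_u = 1` and `g|_w = s`,
then `s ∈ St_G(n)_v` for every `n ≥ 1` and every `v` with `|v| ≥ n + N`.  In particular,
if this holds for every `s` in a generating set of `G`, then `G` is mixing with delay
constant `N`. -/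
theorem commutator_trick
    (d : ℕ) (hd : 2 ≤ d) (G : Subgroup (AutT d))
    (hfr : Fractal d G) (hst : StabLevelTrans d G) :
    (∀ s ∈ G, ∀ N : ℕ, 1 ≤ N →
      (∃ g ∈ G, ∃ u w : V d, u.length ≤ w.length ∧ w.length ≤ N ∧
          (g : Equiv.Perm (V d)) u = u ∧ (g : Equiv.Perm (V d)) w = w ∧
          sectionAt g u = 1 ∧ sectionAt g w = s) →
      ∀ n : ℕ, 1 ≤ n → ∀ v : V d, n + N ≤ v.length →
        ∃ h ∈ G, h ∈ levelStab d n ∧ (h : Equiv.Perm (V d)) v = v ∧ sectionAt h v = s)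
    ∧
    (∀ N : ℕ, 1 ≤ N → ∀ S : Set (AutT d), Subgroup.closure S = G →
      (∀ s ∈ S, ∃ g ∈ G, ∃ u w : V d, u.length ≤ w.length ∧ w.length ≤ N ∧
          (g : Equiv.Perm (V d)) u = u ∧ (g : Equiv.Perm (V d)) w = w ∧
          sectionAt g u = 1 ∧ sectionAt g w = s) →
      MixingWithDelay d G N) := by
  constructor
  · intro s hs N hN hex n hn v hv
    exact commutator_trick_single d hd G hfr hst s hs N hN hex n hn v hv
  · intro N hN S hSG hS
    refine ⟨hfr, hst, ?_⟩
    intro m hm n hn v hv a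
    constructor
    · rintro ⟨g, hgG, -, -, htr⟩
      exact ⟨sectionAt g v, hfr.1 g hgG v, htr⟩
    · rintro ⟨b, hbG, htr⟩
      have hle : Subgroup.closure S ≤ secStabGroup d G n v := by
        rw [Subgroup.closure_le]
        intro s hsS
        have hsG : s ∈ G := by rw [← hSG]; exact Subgroup.subset_closure hsS
        exact commutator_trick_single d hd G hfr hst s hsG N hN (hS s hsS) n hn v hv
      rw [hSG] at hle
      obtain ⟨h, hG, hSt, hfix, hsec⟩ := hle hbG
      exact ⟨h, hG, hSt, hfix, by rw [hsec]; exact htr⟩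

end ArbGal
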